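/- For any probability measure μ on ℝ, one has (∫ (|x| − 1)² dμ(x))^{1/2} ≤ (∫ (x² − 1)² dμ(x))^{1/2}. In particular, if μ is symmetric, then W₂(μ, b) ≤ D*(μ|b), where b is the Rademacher law and D*(μ|b) := (∫(x²−1)²dμ)^{1/2}. -/

import Mathlib

open MeasureTheory Real
open scoped ENNReal

/-- The Rademacher (symmetric Bernoulli) distribution `b = (1/2)δ₋₁ + (1/2)δ₁`. -/
noncomputable def rademacher : Measure ℝ :=
  (1/2 : ℝ≥0∞) • Measure.dirac (-1) + (1/2 : ℝ≥0∞) • Measure.dirac 1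

/-- The squared 2-Wasserstein distance between two measures on ℝ, as the infimum
of the quadratic transport cost over all couplings. -/
noncomputable def W2sq (μ ν : Measure ℝ) : ℝ≥0∞ :=
  ⨅ (pi : Measure (ℝ × ℝ)) (_ : pi.map Prod.fst = μ) (_ : pi.map Prod.snd = ν),
    ∫⁻ p, ENNReal.ofReal ((p.1 - p.2) ^ 2) ∂pi

noncomputable def Tp : ℝ → ℝ := fun x => if 0 ≤ x then 1 else -1
noncomputable def Tm : ℝ → ℝ := fun x => if 0 < x then 1 else -1

lemma measurable_Tp : Measurable Tp :=
  Measurable.ite (measurableSet_le measurable_const measurable_id) measurable_const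
    measurable_const

lemma measurable_Tm : Measurable Tm :=
  Measurable.ite (measurableSet_lt measurable_const measurable_id) measurable_const
    measurable_const

/-- Boolean WS inequality: for any probability measure `μ` on ℝ,
`(∫(|x|−1)²dμ)^{1/2} ≤ (∫(x²−1)²dμ)^{1/2}`, and if `μ` is symmetric then
`W₂(μ,b) ≤ D*(μ|b)`. -/
theorem boolean_WS (μ : Measure ℝ) [IsProbabilityMeasure μ] :
    (∫⁻ x, ENNReal.ofReal ((|x| - 1) ^ 2) ∂μ) ^ (1/2 : ℝ) ≤
      (∫⁻ x, ENNReal.ofReal ((x ^ 2 - 1) ^ 2) ∂μ) ^ (1/2 : ℝ) ∧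
    (μ.map (fun x => -x) = μ →
      (W2sq μ rademacher) ^ (1/2 : ℝ) ≤
        (∫⁻ x, ENNReal.ofReal ((x ^ 2 - 1) ^ 2) ∂μ) ^ (1/2 : ℝ)) := by
  have hmono : (∫⁻ x, ENNReal.ofReal ((|x| - 1) ^ 2) ∂μ) ≤
      ∫⁻ x, ENNReal.ofReal ((x ^ 2 - 1) ^ 2) ∂μ := by
    refine lintegral_mono fun x => ENNReal.ofReal_le_ofReal ?_
    nlinarith [sq_abs x, abs_nonneg x, sq_nonneg (|x| - 1), sq_nonneg (|x| + 1)]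
  refine ⟨ENNReal.rpow_le_rpow hmono (by norm_num), fun hsym => ?_⟩
  -- the coupling
  set pi : Measure (ℝ × ℝ) :=
    (1/2 : ℝ≥0∞) • μ.map (fun x => (x, Tp x)) + (1/2 : ℝ≥0∞) • μ.map (fun x => (x, Tm x))
    with hpi
  have hgp : Measurable fun x : ℝ => (x, Tp x) := measurable_id.prodMk measurable_Tp
  have hgm : Measurable fun x : ℝ => (x, Tm x) := measurable_id.prodMk measurable_Tm
  have hfst : pi.map Prod.fst = μ := by
    rw [hpi, Measure.map_add _ _ measurable_fst, Measure.map_smul, Measure.map_smul,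
      Measure.map_map measurable_fst hgp, Measure.map_map measurable_fst hgm]
    have : (Prod.fst ∘ fun x : ℝ => (x, Tp x)) = id := rfl
    rw [this]
    have : (Prod.fst ∘ fun x : ℝ => (x, Tm x)) = id := rfl
    rw [this, Measure.map_id, ← add_smul, ENNReal.add_halves, one_smul]
  -- symmetry facts
  have hIio : μ (Set.Iio 0) = μ (Set.Ioi 0) := by
    conv_lhs => rw [← hsym]
    rw [Measure.map_apply measurable_neg measurableSet_Iio]
    congr 1
    ext x
    simp
  have hIic : μ (Set.Iic 0) = μ (Set.Ici 0) := by
    conv_lhs => rw [← hsym]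
    rw [Measure.map_apply measurable_neg measurableSet_Iic]
    congr 1
    ext x
    simp
  have hsum : μ (Set.Ici 0) + μ (Set.Ioi 0) = 1 := by
    have hc := measure_add_measure_compl (μ := μ) (measurableSet_Ici (a := (0:ℝ)))
    rw [show (Set.Ici (0:ℝ))ᶜ = Set.Iio 0 from by ext x; simp] at hc
    rw [← hIio]
    rw [measure_univ] at hc
    exact hc
  have hsnd : pi.map Prod.snd = rademacher := by
    rw [hpi, Measure.map_add _ _ measurable_snd, Measure.map_smul, Measure.map_smul,
      Measure.map_map measurable_snd hgp, Measure.map_map measurable_snd hgm]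
    have h1 : (Prod.snd ∘ fun x : ℝ => (x, Tp x)) = Tp := rfl
    have h2 : (Prod.snd ∘ fun x : ℝ => (x, Tm x)) = Tm := rfl
    rw [h1, h2]
    ext s hs
    rw [Measure.add_apply, Measure.smul_apply, Measure.smul_apply,
      Measure.map_apply measurable_Tp hs, Measure.map_apply measurable_Tm hs,
      rademacher, Measure.add_apply, Measure.smul_apply, Measure.smul_apply,
      Measure.dirac_apply' _ hs, Measure.dirac_apply' _ hs]
    by_cases hone : (1:ℝ) ∈ s <;> by_cases hmone : (-1:ℝ) ∈ s
    · have e1 : Tp ⁻¹' s = Set.univ := by ext x; simp only [Tp, Set.mem_preimage]; split_ifs <;> simp [hone, hmone]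
      have e2 : Tm ⁻¹' s = Set.univ := by ext x; simp only [Tm, Set.mem_preimage]; split_ifs <;> simp [hone, hmone]
      simp [e1, e2, Set.indicator_of_mem, hone, hmone, ENNReal.add_halves]
    · have e1 : Tp ⁻¹' s = Set.Ici 0 := by ext x; simp only [Tp, Set.mem_preimage, Set.mem_Ici]; split_ifs with h <;> simp [hone, hmone, h]
      have e2 : Tm ⁻¹' s = Set.Ioi 0 := by ext x; simp only [Tm, Set.mem_preimage, Set.mem_Ioi]; split_ifs with h <;> simp [hone, hmone, h]
      rw [e1, e2]
      simp only [Set.indicator_of_mem hone, Set.indicator_of_notMem hmone, smul_eq_mul,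
        Pi.one_apply, mul_zero, mul_one, zero_add]
      rw [← mul_add, hsum, mul_one]
    · have e1 : Tp ⁻¹' s = Set.Iio 0 := by
        ext x
        simp only [Tp, Set.mem_preimage, Set.mem_Iio, ← not_le]
        by_cases h : 0 ≤ x
        · simp [h, hone]
        · simp [h, hmone]
      have e2 : Tm ⁻¹' s = Set.Iic 0 := by
        ext x
        simp only [Tm, Set.mem_preimage, Set.mem_Iic, ← not_lt]
        by_cases h : 0 < x
        · simp [h, hone]
        · simp [h, hmone]
      rw [e1, e2, hIio, hIic]
      simp only [Set.indicator_of_mem hmone, Set.indicator_of_notMem hone, smul_eq_mul,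
        Pi.one_apply, mul_zero, mul_one, add_zero]
      rw [← mul_add, add_comm, hsum, mul_one]
    · have e1 : Tp ⁻¹' s = ∅ := by ext x; simp only [Tp, Set.mem_preimage]; split_ifs <;> simp [hone, hmone]
      have e2 : Tm ⁻¹' s = ∅ := by ext x; simp only [Tm, Set.mem_preimage]; split_ifs <;> simp [hone, hmone]
      simp [e1, e2, Set.indicator_of_notMem, hone, hmone]
  -- cost bound
  have hcost : (∫⁻ p, ENNReal.ofReal ((p.1 - p.2) ^ 2) ∂pi) =
      ∫⁻ x, ENNReal.ofReal ((|x| - 1) ^ 2) ∂μ := by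
    have hm : Measurable fun p : ℝ × ℝ => ENNReal.ofReal ((p.1 - p.2) ^ 2) := by
      measurability
    rw [hpi, lintegral_add_measure, lintegral_smul_measure, lintegral_smul_measure,
      lintegral_map hm hgp, lintegral_map hm hgm]
    have e1 : ∀ x : ℝ, ENNReal.ofReal ((x - Tp x) ^ 2) = ENNReal.ofReal ((|x| - 1) ^ 2) := by
      intro x
      simp only [Tp]
      split_ifs with h
      · rw [abs_of_nonneg h]
      · rw [abs_of_neg (not_le.mp h)]; ring_nf
    have e2 : ∀ x : ℝ, ENNReal.ofReal ((x - Tm x) ^ 2) = ENNReal.ofReal ((|x| - 1) ^ 2) := by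
      intro x
      simp only [Tm]
      split_ifs with h
      · rw [abs_of_pos h]
      · rw [abs_of_nonpos (not_lt.mp h)]; ring_nf
    simp only [e1, e2]
    rw [smul_eq_mul, ← two_mul, ← mul_assoc, one_div, ENNReal.mul_inv_cancel two_ne_zero ENNReal.ofNat_ne_top,
      one_mul]
  have hW : W2sq μ rademacher ≤ ∫⁻ x, ENNReal.ofReal ((|x| - 1) ^ 2) ∂μ := by
    rw [← hcost]
    exact iInf_le_of_le pi (iInf_le_of_le hfst (iInf_le _ hsnd))
  exact le_trans (ENNReal.rpow_le_rpow hW (by norm_num))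
    (ENNReal.rpow_le_rpow hmono (by norm_num))
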